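/- Under the action of the automorphism group of K (the cyclic group generated by σ = (1 3 2 4)(5 6)(7 9 10 8)), the set {1,…,11} decomposes into exactly the four orbits {1,2,3,4}, {5,6}, {7,8,9,10}, {11}, and the induced action on the point set P (where φ acts by S ↦ φ(S)) has exactly 8 orbits. -/

import Mathlib

open Finset

/-- The point set `P` of the combinatorics `K` on the line set `{1,…,11}`. -/
def Kpoints : Finset (Finset ℕ) :=
  { {1,2}, {1,3,5,7}, {1,4,6,8}, {1,9}, {1,10,11}, {2,3,6,9}, {2,4,5,10},
    {2,7,11}, {2,8}, {3,4}, {3,8,11}, {3,10}, {4,7}, {4,9,11}, {5,6},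
    {5,8,9}, {5,11}, {6,7,10}, {6,11}, {7,8}, {7,9}, {8,10}, {9,10} }

/-- The permutation `σ = (1 3 2 4)(5 6)(7 9 10 8)`. -/
def sigmaK : Equiv.Perm ℕ :=
  ([1,3,2,4] : List ℕ).formPerm * ([5,6] : List ℕ).formPerm *
    ([7,9,10,8] : List ℕ).formPerm

set_option maxRecDepth 10000 in
lemma sigma_pow4 : sigmaK ^ 4 = 1 := by
  ext x
  by_cases h : x ≤ 10
  · interval_cases x <;> decide
  · have hfix : sigmaK x = x := by
      unfold sigmaK
      rw [Equiv.Perm.mul_apply, Equiv.Perm.mul_apply,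
        List.formPerm_apply_of_notMem (l := [7,9,10,8]) (by simp; omega),
        List.formPerm_apply_of_notMem (l := [5,6]) (by simp; omega),
        List.formPerm_apply_of_notMem (l := [1,3,2,4]) (by simp; omega)]
    simp [pow_succ, Equiv.Perm.mul_apply, hfix]

lemma zpow_reduce (k : ℤ) : ∃ r : Fin 4, sigmaK ^ k = sigmaK ^ (r : ℕ) := by
  have h0 : (0:ℤ) ≤ k % 4 := Int.emod_nonneg k (by norm_num)
  have h1 : k % 4 < 4 := Int.emod_lt_of_pos k (by norm_num)
  refine ⟨⟨(k % 4).toNat, by omega⟩, ?_⟩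
  have hk : k = 4 * (k / 4) + k % 4 := (Int.mul_ediv_add_emod k 4).symm
  calc sigmaK ^ k = sigmaK ^ (4 * (k / 4) + k % 4) := by rw [← hk]
    _ = (sigmaK ^ (4:ℤ)) ^ (k / 4) * sigmaK ^ (k % 4) := by
        rw [zpow_add, zpow_mul]
    _ = sigmaK ^ (k % 4) := by
        rw [show (4:ℤ) = ((4:ℕ):ℤ) from rfl, zpow_natCast, sigma_pow4, one_zpow, one_mul]
    _ = sigmaK ^ (((k % 4).toNat : ℤ)) := by rw [Int.toNat_of_nonneg h0]
    _ = sigmaK ^ ((k % 4).toNat) := zpow_natCast _ _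

/-- Representatives of the 8 orbits on `Kpoints`. -/
def Krep : Finset (Finset ℕ) :=
  { {1,2}, {1,3,5,7}, {1,9}, {1,10,11}, {5,6}, {5,8,9}, {5,11}, {7,8} }

lemma orbit_eq (x : ℕ) :
    {y : ℕ | ∃ k : ℤ, (sigmaK ^ k) x = y} =
      {(sigmaK ^ (0:ℕ)) x, (sigmaK ^ (1:ℕ)) x, (sigmaK ^ (2:ℕ)) x, (sigmaK ^ (3:ℕ)) x} := by
  ext y
  constructor
  · rintro ⟨k, rfl⟩
    obtain ⟨r, hr⟩ := zpow_reduce k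
    rw [hr]
    fin_cases r <;> simp [Set.mem_insert_iff]
  · intro hy
    rcases hy with h | h | h | h <;>
      [exact ⟨(0:ℤ), by rw [show (0:ℤ) = ((0:ℕ):ℤ) from rfl, zpow_natCast]; exact h.symm ▸ rfl⟩;
       exact ⟨(1:ℤ), by rw [show (1:ℤ) = ((1:ℕ):ℤ) from rfl, zpow_natCast]; exact h.symm ▸ rfl⟩;
       exact ⟨(2:ℤ), by rw [show (2:ℤ) = ((2:ℕ):ℤ) from rfl, zpow_natCast]; exact h.symm ▸ rfl⟩;
       exact ⟨(3:ℤ), by rw [show (3:ℤ) = ((3:ℕ):ℤ) from rfl, zpow_natCast]; exact h.symm ▸ rfl⟩]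

theorem stmt6 :
    ({x : ℕ | ∃ k : ℤ, (sigmaK ^ k) 1 = x} = ({1, 2, 3, 4} : Set ℕ)) ∧
    ({x : ℕ | ∃ k : ℤ, (sigmaK ^ k) 5 = x} = ({5, 6} : Set ℕ)) ∧
    ({x : ℕ | ∃ k : ℤ, (sigmaK ^ k) 7 = x} = ({7, 8, 9, 10} : Set ℕ)) ∧
    ({x : ℕ | ∃ k : ℤ, (sigmaK ^ k) 11 = x} = ({11} : Set ℕ)) ∧
    (∃ R : Finset (Finset ℕ), R ⊆ Kpoints ∧ R.card = 8 ∧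
      ∀ S ∈ Kpoints, ∃! T, T ∈ R ∧ ∃ k : ℤ, S.image ⇑(sigmaK ^ k) = T) := by
  refine ⟨?_, ?_, ?_, ?_, ?_⟩
  · rw [orbit_eq]; norm_num [show (sigmaK ^ (0:ℕ)) 1 = 1 from by decide,
      show (sigmaK ^ (1:ℕ)) 1 = 3 from by decide,
      show (sigmaK ^ (2:ℕ)) 1 = 2 from by decide,
      show (sigmaK ^ (3:ℕ)) 1 = 4 from by decide]
    ext y; simp [Set.mem_insert_iff]; tauto
  · rw [orbit_eq]; norm_num [show (sigmaK ^ (0:ℕ)) 5 = 5 from by decide,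
      show (sigmaK ^ (1:ℕ)) 5 = 6 from by decide, show sigmaK 5 = 6 from by decide,
      show (sigmaK ^ (2:ℕ)) 5 = 5 from by decide,
      show (sigmaK ^ (3:ℕ)) 5 = 6 from by decide]
  · rw [orbit_eq]; norm_num [show (sigmaK ^ (0:ℕ)) 7 = 7 from by decide,
      show (sigmaK ^ (1:ℕ)) 7 = 9 from by decide,
      show (sigmaK ^ (2:ℕ)) 7 = 10 from by decide,
      show (sigmaK ^ (3:ℕ)) 7 = 8 from by decide]
    ext y; simp [Set.mem_insert_iff]; tauto
  · rw [orbit_eq]; norm_num [show (sigmaK ^ (0:ℕ)) 11 = 11 from by decide,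
      show (sigmaK ^ (1:ℕ)) 11 = 11 from by decide, show sigmaK 11 = 11 from by decide,
      show (sigmaK ^ (2:ℕ)) 11 = 11 from by decide,
      show (sigmaK ^ (3:ℕ)) 11 = 11 from by decide]
  · refine ⟨Krep, by decide, by decide, ?_⟩
    have key1 : ∀ S ∈ Kpoints, ∃ r : Fin 4, S.image ⇑(sigmaK ^ (r:ℕ)) ∈ Krep := by decide
    have key2 : ∀ S ∈ Kpoints, ∀ r r' : Fin 4,
        S.image ⇑(sigmaK ^ (r:ℕ)) ∈ Krep → S.image ⇑(sigmaK ^ (r':ℕ)) ∈ Krep →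
        S.image ⇑(sigmaK ^ (r:ℕ)) = S.image ⇑(sigmaK ^ (r':ℕ)) := by decide
    intro S hS
    obtain ⟨r, hr⟩ := key1 S hS
    refine ⟨S.image ⇑(sigmaK ^ (r:ℕ)), ⟨hr, ⟨((r:ℕ):ℤ), by rw [zpow_natCast]⟩⟩, ?_⟩
    rintro T ⟨hTR, k, rfl⟩
    obtain ⟨r', hr'⟩ := zpow_reduce k
    rw [hr'] at hTR ⊢
    exact key2 S hS r' r hTR hr
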